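/- If g defines a bounded linear functional l_g(f) = ∫ f·g dμ on G(ψ), then there is K < ∞ such that for all z > 0, ∫_z^∞ μ{|g| > u} du ≤ K·φ(G(ψ), μ{|g| > z}), where φ is the fundamental function of G(ψ). -/

import Mathlib

open MeasureTheory Set Filter

/-- The moment norm `‖f‖_{G(ψ)} = sup_{p ∈ (a,b)} ‖f‖_{L^p} / ψ(p)`. -/
noncomputable def GNorm {X : Type*} [MeasurableSpace X] (μ : Measure X)
    (a b : ℝ) (ψ : ℝ → ℝ) (f : X → ℝ) : ENNReal :=
  ⨆ p : Set.Ioo a b, eLpNorm f (ENNReal.ofReal (p : ℝ)) μ / ENNReal.ofReal (ψ p)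

/-- The fundamental function `φ(δ) = sup_{p ∈ (a,b)} δ^{1/p}/ψ(p)`. -/
noncomputable def PhiG (a b : ℝ) (ψ : ℝ → ℝ) (δ : ENNReal) : ENNReal :=
  ⨆ p : Set.Ioo a b, δ ^ (1 / (p : ℝ)) / ENNReal.ofReal (ψ p)

lemma sign_mul_self' (x : ℝ) : Real.sign x * x = |x| := by
  rcases lt_trichotomy x 0 with h | h | h
  · rw [Real.sign_of_neg h, abs_of_neg h]; ring
  · simp [h]
  · rw [Real.sign_of_pos h, abs_of_pos h]; ring

lemma norm_sign_of_ne_zero' {x : ℝ} (hx : x ≠ 0) : ‖Real.sign x‖ = 1 := by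
  rcases hx.lt_or_gt with h | h
  · rw [Real.sign_of_neg h]; norm_num
  · rw [Real.sign_of_pos h]; norm_num

lemma measurable_real_sign' {X : Type*} [MeasurableSpace X] {g : X → ℝ}
    (hg : Measurable g) : Measurable fun x => Real.sign (g x) := by
  have h : ∀ y : ℝ, Real.sign y = if y < 0 then -1 else if 0 < y then 1 else 0 :=
    fun y => rfl
  simp only [h]
  exact Measurable.ite (measurableSet_lt hg measurable_const) measurable_const
    (Measurable.ite (measurableSet_lt measurable_const hg) measurable_const
      measurable_const)

/-- If `g` generates a bounded linear functional `f ↦ ∫ f g dμ` on `G(ψ)`, then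
`∫_z^∞ T(g,u) du ≤ K φ(G(ψ), T(g,z))` for all `z > 0`. -/
theorem dual_tail_condition {X : Type*} [MeasurableSpace X] (μ : Measure X)
    [SigmaFinite μ] (a b : ℝ) (ha : 1 ≤ a) (hab : a < b)
    (ψ : ℝ → ℝ) (hψ : ∀ p ∈ Set.Ioo a b, 0 < ψ p)
    (g : X → ℝ) (hg : Measurable g)
    (hbound : ∃ K : ENNReal, K < ⊤ ∧ ∀ f : X → ℝ, Measurable f →
      GNorm μ a b ψ f < ⊤ → Integrable (fun x => f x * g x) μ ∧
      ENNReal.ofReal |∫ x, f x * g x ∂μ| ≤ K * GNorm μ a b ψ f) :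
    ∃ K : ENNReal, K < ⊤ ∧ ∀ z : ℝ, 0 < z →
      (∫⁻ u in Set.Ioi z, μ {x | u < |g x|}) ≤
        K * PhiG a b ψ (μ {x | z < |g x|}) := by
  obtain ⟨K, hK, hb⟩ := hbound
  refine ⟨K + 1, ENNReal.add_lt_top.mpr ⟨hK, ENNReal.one_lt_top⟩, ?_⟩
  intro z hz
  set A := {x | z < |g x|} with hA
  have hAmeas : MeasurableSet A := measurableSet_lt measurable_const hg.abs
  by_cases hA0 : μ A = 0
  · have : (∫⁻ u in Set.Ioi z, μ {x | u < |g x|}) = 0 := by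
      have h0 : ∀ u ∈ Set.Ioi z, μ {x | u < |g x|} = 0 := by
        intro u hu
        refine measure_mono_null (fun x hx => ?_) hA0
        exact lt_trans hu (show u < |g x| from hx)
      calc (∫⁻ u in Set.Ioi z, μ {x | u < |g x|})
          = ∫⁻ _ in Set.Ioi z, 0 := setLIntegral_congr_fun measurableSet_Ioi
            h0
        _ = 0 := by simp
    rw [this]; exact bot_le
  by_cases hphi : PhiG a b ψ (μ A) = ⊤
  · rw [hphi, ENNReal.mul_top (by simp)]
    exact le_top
  -- main case
  set f := A.indicator fun x => Real.sign (g x) with hf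
  have hfmeas : Measurable f := (measurable_real_sign' hg).indicator hAmeas
  have hGeq : GNorm μ a b ψ f = PhiG a b ψ (μ A) := by
    unfold GNorm PhiG
    refine iSup_congr fun p => ?_
    congr 1
    have hp0 : (0:ℝ) < (p : ℝ) := lt_of_lt_of_le (lt_of_lt_of_le zero_lt_one ha)
      (le_of_lt p.2.1)
    have h1 : eLpNorm f (ENNReal.ofReal (p : ℝ)) μ
        = eLpNorm (A.indicator fun _ => (1:ℝ)) (ENNReal.ofReal (p : ℝ)) μ := by
      refine eLpNorm_congr_norm_ae (Filter.Eventually.of_forall fun x => ?_)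
      by_cases hx : x ∈ A
      · have hgx : g x ≠ 0 := by
          intro h0
          have : z < |g x| := hx
          rw [h0] at this; simp at this; linarith
        simp only [hf, indicator_of_mem hx]
        rw [norm_sign_of_ne_zero' hgx]; norm_num
      · simp [hf, indicator_of_notMem hx]
    rw [h1, eLpNorm_indicator_const hAmeas (by simp [hp0]) ENNReal.ofReal_ne_top]
    simp [ENNReal.toReal_ofReal hp0.le]
  have hGlt : GNorm μ a b ψ f < ⊤ := by
    rw [hGeq]; exact lt_top_iff_ne_top.mpr hphi
  obtain ⟨hint, hle⟩ := hb f hfmeas hGlt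
  have hfg : (fun x => f x * g x) = A.indicator fun x => |g x| := by
    funext x
    by_cases hx : x ∈ A
    · simp [hf, indicator_of_mem hx, sign_mul_self']
    · simp [hf, indicator_of_notMem hx]
  have hint' : Integrable (A.indicator fun x => |g x|) μ := hfg ▸ hint
  have hnn : ∀ x, 0 ≤ A.indicator (fun x => |g x|) x :=
    fun x => indicator_nonneg (fun y _ => abs_nonneg _) x
  -- layer cake
  have step1 : (∫⁻ u in Set.Ioi z, μ {x | u < |g x|})
      = ∫⁻ u in Set.Ioi z, μ {x | u < A.indicator (fun y => |g y|) x} := by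
    refine setLIntegral_congr_fun measurableSet_Ioi
      (fun u hu => ?_)
    congr 1
    ext x
    simp only [mem_setOf_eq]
    constructor
    · intro hx
      have hxA : x ∈ A := lt_trans hu hx
      rw [indicator_of_mem hxA]; exact hx
    · intro hx
      by_cases hxA : x ∈ A
      · rwa [indicator_of_mem hxA] at hx
      · rw [indicator_of_notMem hxA] at hx
        exact absurd hx (not_lt.mpr (le_trans hz.le (le_of_lt hu)))
  have step2 : (∫⁻ u in Set.Ioi z, μ {x | u < A.indicator (fun y => |g y|) x})
      ≤ ∫⁻ u in Set.Ioi 0, μ {x | u < A.indicator (fun y => |g y|) x} :=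
    lintegral_mono_set (Set.Ioi_subset_Ioi hz.le)
  have step3 : (∫⁻ u in Set.Ioi 0, μ {x | u < A.indicator (fun y => |g y|) x})
      = ∫⁻ x, ENNReal.ofReal (A.indicator (fun y => |g y|) x) ∂μ :=
    (lintegral_eq_lintegral_meas_lt μ (Filter.Eventually.of_forall hnn)
      (hg.abs.indicator hAmeas).aemeasurable).symm
  have step4 : (∫⁻ x, ENNReal.ofReal (A.indicator (fun y => |g y|) x) ∂μ)
      = ENNReal.ofReal (∫ x, A.indicator (fun y => |g y|) x ∂μ) :=
    (ofReal_integral_eq_lintegral_ofReal hint'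
      (Filter.Eventually.of_forall hnn)).symm
  have habs : |∫ x, f x * g x ∂μ| = ∫ x, A.indicator (fun y => |g y|) x ∂μ := by
    rw [hfg]
    exact abs_of_nonneg (integral_nonneg hnn)
  calc (∫⁻ u in Set.Ioi z, μ {x | u < |g x|})
      ≤ ∫⁻ u in Set.Ioi 0, μ {x | u < A.indicator (fun y => |g y|) x} :=
        step1 ▸ step2
    _ = ENNReal.ofReal |∫ x, f x * g x ∂μ| := by rw [step3, step4, habs]
    _ ≤ K * GNorm μ a b ψ f := hle
    _ = K * PhiG a b ψ (μ A) := by rw [hGeq]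
    _ ≤ (K + 1) * PhiG a b ψ (μ A) := by
        exact mul_le_mul_left (le_self_add) _
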